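/- arXiv:2005.13212 — 2 statements merged into one kernel-verified Lean document; each statement's English description precedes it below -/
import Mathlib

section
/- Let X be a nonempty countable metrizable topological space that is perfect (has no isolated points). Then X is homeomorphic to the rational numbers ℚ, and in particular to ℙ_f, the set of eventually-zero sequences in Cantor space. -/
/-- The set of eventually-zero binary sequences in Cantor space. -/
def Pf : Set (ℕ → Bool) := {α | ∀ᶠ n in Filter.atTop, α n = false}

open Set Metric

set_option linter.unusedSectionVars false

section Sierpinski

private noncomputable def schemeD {X : Type*} (PZ : Set X → ℕ → ℤ → Set X) : List ℤ → Set X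
  | [] => Set.univ
  | k :: t => PZ (schemeD PZ t) t.length k

open Classical in
private noncomputable def schemePref {X : Type*} (PZ : Set X → ℕ → ℤ → Set X) (x : X) :
    ℕ → List ℤ
  | 0 => []
  | n+1 =>
    (if h : ∃ k : ℤ, x ∈ schemeD PZ (k :: schemePref PZ x n) then h.choose else 0)
      :: schemePref PZ x n


variable {X : Type*} [MetricSpace X] [Countable X]


lemma clopen_nbhd (x : X) {ε : ℝ} (hε : 0 < ε) :
    ∃ W : Set X, IsClopen W ∧ x ∈ W ∧ W ⊆ Metric.ball x ε := by
  have hD : (Set.range (fun y : X => dist x y)).Countable := Set.countable_range _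
  have hI : ¬ (Set.Ioo (ε/2) ε).Countable := by
    intro h
    have := h.le_aleph0
    rw [Cardinal.mk_Ioo_real (by linarith)] at this
    exact absurd this (by simpa using Cardinal.aleph0_lt_continuum.not_ge)
  obtain ⟨r, hrI, hrD⟩ : ∃ r ∈ Set.Ioo (ε/2) ε, r ∉ Set.range (fun y : X => dist x y) := by
    by_contra h
    push_neg at h
    exact hI (hD.mono h)
  refine ⟨Metric.ball x r, ⟨?_, Metric.isOpen_ball⟩, ?_, ?_⟩
  · rw [← isOpen_compl_iff]
    have : (Metric.ball x r)ᶜ = {y : X | r < dist x y} := by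
      ext y
      simp only [Metric.mem_ball, Set.mem_compl_iff, not_lt, Set.mem_setOf_eq, dist_comm y x]
      constructor
      · intro h
        rcases h.lt_or_eq with h' | h'
        · exact h'
        · exact absurd ⟨y, h'.symm⟩ hrD
      · exact le_of_lt
    rw [this]
    exact isOpen_lt continuous_const (continuous_const.dist continuous_id)
  · simp only [Metric.mem_ball, dist_self]
    linarith [hrI.1]
  · exact Metric.ball_subset_ball hrI.2.le

variable (hperf : ∀ x : X, ¬ IsOpen ({x} : Set X))
include hperf

lemma open_infinite {U : Set X} (hU : IsOpen U) (hne : U.Nonempty) : U.Infinite := by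
  intro hfin
  obtain ⟨x, hx⟩ := hne
  have hcl : IsClosed (U \ {x}) := (hfin.diff : (U \ {x}).Finite).isClosed
  have : IsOpen ({x} : Set X) := by
    have h : ({x} : Set X) = U ∩ (U \ {x})ᶜ := by
      ext y
      simp only [Set.mem_singleton_iff, Set.mem_inter_iff, Set.mem_compl_iff, Set.mem_diff,
        not_and, not_not]
      constructor
      · rintro rfl; exact ⟨hx, fun _ => rfl⟩
      · rintro ⟨h1, h2⟩; exact h2 h1
    rw [h]
    exact hU.inter hcl.isOpen_compl
  exact hperf x this


include hperf in
lemma partitionN {U : Set X} (hU : IsClopen U) (hne : U.Nonempty) {δ : ℝ} (hδ : 0 < δ) :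
    ∃ V : ℕ → Set X, (∀ n, IsClopen (V n)) ∧ (∀ n, (V n).Nonempty) ∧
      Pairwise (Function.onFun Disjoint V) ∧ (⋃ n, V n) = U ∧
      (∀ n, ∀ y ∈ V n, ∀ z ∈ V n, dist y z ≤ δ) := by
  classical
  obtain ⟨f, hf⟩ := (Set.to_countable U).exists_eq_range hne
  have step : ∀ R : Set X, ∃ W : Set X,
      IsClopen R → R ⊆ U → R.Infinite →
        IsClopen W ∧ W ⊆ R ∧ (∀ m, f m ∈ R → (∀ j, f j ∈ R → m ≤ j) → f m ∈ W) ∧ (R \ W).Infinite ∧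
          ∀ y ∈ W, ∀ z ∈ W, dist y z ≤ δ := by
    intro R
    by_cases hR : IsClopen R ∧ R ⊆ U ∧ R.Infinite
    · obtain ⟨hRc, hRU, hRi⟩ := hR
      have hex : ∃ m, f m ∈ R := by
        obtain ⟨x, hx⟩ := hRi.nonempty
        have hx' : x ∈ Set.range f := by rw [← hf]; exact hRU hx
        obtain ⟨m, hm⟩ := hx'
        exact ⟨m, hm ▸ hx⟩
      set v := f (Nat.find hex) with hv
      have hvR : v ∈ R := Nat.find_spec hex
      obtain ⟨v', hv'R, hv'⟩ := hRi.exists_notMem_finite (Set.finite_singleton v)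
      simp only [Set.mem_singleton_iff] at hv'
      have hd : 0 < min (δ/2) (dist v' v) := lt_min (by linarith) (dist_pos.2 hv')
      obtain ⟨W0, hW0c, hvW0, hW0b⟩ := clopen_nbhd v hd
      have hv'W0 : v' ∉ W0 := by
        intro h
        have := hW0b h
        rw [Metric.mem_ball] at this
        exact absurd (this.trans_le (min_le_right _ _)) (lt_irrefl _)
      refine ⟨W0 ∩ R, fun _ _ _ => ⟨hW0c.inter hRc, Set.inter_subset_right, ?_, ?_, ?_⟩⟩
      · intro m hm hmin
        have h1 : Nat.find hex ≤ m := Nat.find_min' hex hm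
        have h2 : m ≤ Nat.find hex := hmin _ (Nat.find_spec hex)
        have : m = Nat.find hex := le_antisymm h2 h1
        rw [this]
        exact ⟨hvW0, hvR⟩
      · apply open_infinite hperf (hRc.2.sdiff (hW0c.inter hRc).1)
        exact ⟨v', hv'R, fun h => hv'W0 h.1⟩
      · intro y hy z hz
        have h1 := hW0b hy.1
        have h2 := hW0b hz.1
        rw [Metric.mem_ball] at h1 h2
        have := dist_triangle y v z
        rw [dist_comm v z] at this
        have b1 := h1.trans_le (min_le_left _ _)
        have b2 := h2.trans_le (min_le_left _ _)
        linarith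
    · exact ⟨∅, fun h1 h2 h3 => absurd ⟨h1, h2, h3⟩ hR⟩
  choose Wch hWch using step
  set R : ℕ → Set X := fun n => Nat.rec U (fun _ S => S \ Wch S) n with hR
  have hRsucc : ∀ n, R (n+1) = R n \ Wch (R n) := fun n => rfl
  set V : ℕ → Set X := fun n => Wch (R n) with hV
  have hinv : ∀ n, IsClopen (R n) ∧ R n ⊆ U ∧ (R n).Infinite := by
    intro n
    induction n with
    | zero => exact ⟨hU, subset_rfl, open_infinite hperf hU.2 hne⟩
    | succ k ih =>
      obtain ⟨hc, hu, hi⟩ := ih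
      obtain ⟨hWc, hWsub, _, hWi, _⟩ := hWch (R k) hc hu hi
      exact ⟨hc.diff hWc, (Set.diff_subset).trans hu, hWi⟩
  have hprop : ∀ n, IsClopen (V n) ∧ V n ⊆ R n ∧
      (∀ m, f m ∈ R n → (∀ j, f j ∈ R n → m ≤ j) → f m ∈ V n) ∧ ((R n \ V n).Infinite) ∧
      ∀ y ∈ V n, ∀ z ∈ V n, dist y z ≤ δ := by
    intro n
    obtain ⟨hc, hu, hi⟩ := hinv n
    exact hWch (R n) hc hu hi
  have hRle : ∀ m n, m ≤ n → R n ⊆ R m := by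
    intro m n hmn
    induction n with
    | zero => rw [Nat.le_zero.mp hmn]
    | succ k ih =>
      rcases Nat.lt_or_ge m (k+1) with h | h
      · exact ((hRsucc k ▸ Set.diff_subset).trans (ih (Nat.lt_succ_iff.mp h)))
      · rw [Nat.le_antisymm hmn h]
  have hex : ∀ n, ∃ m, f m ∈ R n := by
    intro n
    obtain ⟨x, hx⟩ := (hinv n).2.2.nonempty
    have hx' : x ∈ Set.range f := by rw [← hf]; exact (hinv n).2.1 hx
    obtain ⟨m, hm⟩ := hx'
    exact ⟨m, hm ▸ hx⟩
  have hlex : ∀ n, ∃ m, (f m ∈ R n) ∧ ∀ j, f j ∈ R n → m ≤ j := by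
    intro n
    classical
    exact ⟨Nat.find (hex n), Nat.find_spec (hex n), fun j hj => Nat.find_min' (hex n) hj⟩
  choose l hlmem hlmin using hlex
  have hlV : ∀ n, f (l n) ∈ V n := fun n => (hprop n).2.2.1 (l n) (hlmem n) (hlmin n)
  have hlstrict : ∀ n, l n < l (n+1) := by
    intro n
    have h1 : f (l (n+1)) ∈ R n := hRle n (n+1) (Nat.le_succ n) (hlmem (n+1))
    have hle : l n ≤ l (n+1) := hlmin n _ h1
    rcases hle.lt_or_eq with h | h
    · exact h
    · exfalso
      have h2 : f (l (n+1)) ∈ R (n+1) := hlmem (n+1)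
      rw [hRsucc n] at h2
      rw [← h] at h2
      exact h2.2 (hlV n)
  have hgrow : ∀ n, n ≤ l n := by
    intro n
    induction n with
    | zero => exact Nat.zero_le _
    | succ k ih => exact Nat.lt_of_le_of_lt ih (hlstrict k)
  have key : ∀ m n : ℕ, m < n → Disjoint (V m) (V n) := by
    intro m n h
    have hsub : V n ⊆ R (m+1) := ((hprop n).2.1).trans (hRle (m+1) n h)
    rw [hRsucc m] at hsub
    exact Set.disjoint_left.mpr fun a ha ha' => (hsub ha').2 ha
  refine ⟨V, fun n => (hprop n).1, fun n => ⟨f (l n), hlV n⟩, ?_, ?_, fun n => (hprop n).2.2.2.2⟩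
  · intro m n hmn
    rcases lt_or_gt_of_ne hmn with h | h
    · exact key m n h
    · exact (key n m h).symm
  · apply Set.eq_of_subset_of_subset
    · exact Set.iUnion_subset fun n => ((hprop n).2.1).trans (hinv n).2.1
    · intro x hx
      have main : ∀ k, x ∉ R k → x ∈ ⋃ n, V n := by
        intro k
        induction k with
        | zero => intro h; exact absurd hx h
        | succ j ih =>
          intro h
          by_cases hj : x ∈ R j
          · rw [hRsucc j] at h
            have : x ∈ V j := by
              by_contra hV'
              exact h ⟨hj, hV'⟩
            exact Set.mem_iUnion.mpr ⟨j, this⟩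
          · exact ih hj
      have hxf : x ∈ Set.range f := by rw [← hf]; exact hx
      obtain ⟨m, rfl⟩ := hxf
      apply main (m+1)
      intro h
      have h1 : l (m+1) ≤ m := hlmin (m+1) m h
      have h2 := hgrow (m+1)
      omega


include hperf in
lemma partitionZ {U : Set X} (hU : IsClopen U) (hne : U.Nonempty) {δ : ℝ} (hδ : 0 < δ) :
    ∃ V : ℤ → Set X, (∀ k, IsClopen (V k)) ∧ (∀ k, (V k).Nonempty) ∧
      Pairwise (Function.onFun Disjoint V) ∧ (⋃ k, V k) = U ∧
      (∀ k, ∀ y ∈ V k, ∀ z ∈ V k, dist y z ≤ δ) := by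
  obtain ⟨V, h1, h2, h3, h4, h5⟩ := partitionN hperf hU hne hδ
  let e : ℤ ≃ ℕ := Denumerable.eqv ℤ
  refine ⟨fun k => V (e k), fun k => h1 _, fun k => h2 _, ?_, ?_, fun k => h5 _⟩
  · intro a c hac
    exact h3 (fun h => hac (e.injective h))
  · rw [← h4]
    exact e.surjective.iUnion_comp V

variable [Nonempty X]

theorem sierpinski_metric (hperf : ∀ x : X, ¬ IsOpen ({x} : Set X)) :
    Nonempty (X ≃ₜ ℚ) := by
  classical
  -- choose the partition function
  have hstep : ∀ (S : Set X) (n : ℕ), ∃ V : ℤ → Set X, IsClopen S → S.Nonempty →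
      ((∀ k, IsClopen (V k)) ∧ (∀ k, (V k).Nonempty) ∧
        Pairwise (Function.onFun Disjoint V) ∧ (⋃ k, V k) = S ∧
        (∀ k, ∀ y ∈ V k, ∀ z ∈ V k, dist y z ≤ (1/2:ℝ)^n)) := by
    intro S n
    by_cases hS : IsClopen S ∧ S.Nonempty
    · obtain ⟨V, h⟩ := partitionZ hperf hS.1 hS.2 (by positivity : (0:ℝ) < (1/2:ℝ)^n)
      exact ⟨V, fun _ _ => h⟩
    · exact ⟨fun _ => ∅, fun h1 h2 => absurd ⟨h1, h2⟩ hS⟩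
  choose PZ hPZ using hstep
  set D : List ℤ → Set X := schemeD PZ with hD
  set P : X → ℕ → List ℤ := schemePref PZ with hP
  have hDnil : D [] = Set.univ := rfl
  have hDcons : ∀ k t, D (k :: t) = PZ (D t) t.length k := fun k t => rfl
  have hPzero : ∀ x, P x 0 = [] := fun x => rfl
  have hPsucc : ∀ x n, P x (n+1) =
      (if h : ∃ k : ℤ, x ∈ D (k :: P x n) then h.choose else 0) :: P x n := by
    intro x n
    rw [hP, hD]
    rw [schemePref]
  -- invariants
  have hDinv : ∀ t, IsClopen (D t) ∧ (D t).Nonempty := by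
    intro t
    induction t with
    | nil => exact ⟨isClopen_univ, Set.univ_nonempty⟩
    | cons k t ih =>
      obtain ⟨h1, h2, h3, h4, h5⟩ := hPZ (D t) t.length ih.1 ih.2
      exact ⟨h1 k, h2 k⟩
  have hDpart : ∀ t, (⋃ k, D (k :: t)) = D t := by
    intro t
    obtain ⟨h1, h2, h3, h4, h5⟩ := hPZ (D t) t.length (hDinv t).1 (hDinv t).2
    simpa [hDcons] using h4
  have hDdisj : ∀ t, ∀ j k : ℤ, j ≠ k → Disjoint (D (j :: t)) (D (k :: t)) := by
    intro t j k hjk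
    obtain ⟨h1, h2, h3, h4, h5⟩ := hPZ (D t) t.length (hDinv t).1 (hDinv t).2
    exact h3 hjk
  have hDsub : ∀ (k : ℤ) t, D (k :: t) ⊆ D t := by
    intro k t
    rw [← hDpart t]
    exact Set.subset_iUnion (fun k => D (k :: t)) k
  have hsmall : ∀ (k : ℤ) t, ∀ y ∈ D (k :: t), ∀ z ∈ D (k :: t),
      dist y z ≤ (1/2:ℝ)^t.length := by
    intro k t
    obtain ⟨h1, h2, h3, h4, h5⟩ := hPZ (D t) t.length (hDinv t).1 (hDinv t).2
    exact h5 k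
  have hPlen : ∀ x n, (P x n).length = n := by
    intro x n
    induction n with
    | zero => rfl
    | succ m ih => rw [hPsucc]; simp [ih]
  have hPmem : ∀ x n, x ∈ D (P x n) := by
    intro x n
    induction n with
    | zero => rw [hPzero, hDnil]; trivial
    | succ m ih =>
      have hex : ∃ k : ℤ, x ∈ D (k :: P x m) := by
        rw [← hDpart (P x m)] at ih
        exact Set.mem_iUnion.mp ih
      rw [hPsucc, dif_pos hex]
      exact hex.choose_spec
  have hPconsEq : ∀ x n, ∃ j : ℤ, P x (n+1) = j :: P x n := by
    intro x n
    rw [hPsucc]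
    exact ⟨_, rfl⟩
  have huniq : ∀ (t : List ℤ) (x : X), x ∈ D t → P x t.length = t := by
    intro t
    induction t with
    | nil => intro x _; exact hPzero x
    | cons k t ih =>
      intro x hx
      have hxt : x ∈ D t := hDsub k t hx
      have ht : P x t.length = t := ih x hxt
      obtain ⟨j, hj⟩ := hPconsEq x t.length
      have hxj : x ∈ D (j :: t) := by
        have := hPmem x (t.length + 1)
        rw [hj, ht] at this
        exact this
      have : j = k := by
        by_contra hne
        exact absurd hx (Set.disjoint_left.mp (hDdisj t j k hne) hxj)
      simp only [List.length_cons]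
      rw [hj, ht, this]
  have hmemiff : ∀ (x y : X) (n : ℕ), y ∈ D (P x n) ↔ P y n = P x n := by
    intro x y n
    constructor
    · intro h
      have := huniq (P x n) y h
      rwa [hPlen] at this
    · intro h
      rw [← h]
      exact hPmem y n
  -- branch function
  set b : X → ℕ → ℤ := fun x n => (P x (n+1)).headI with hb
  have hbP : ∀ x n, P x (n+1) = b x n :: P x n := by
    intro x n
    obtain ⟨j, hj⟩ := hPconsEq x n
    rw [hb]
    simp only
    rw [hj]
    rfl
  have hPagree : ∀ (x y : X) (i : ℕ), ((∀ j, j < i → b x j = b y j) ↔ P x i = P y i) := by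
    intro x y i
    induction i with
    | zero => simp [hPzero]
    | succ m ih =>
      constructor
      · intro h
        rw [hbP, hbP, h m (Nat.lt_succ_self m), ih.mp fun j hj => h j (hj.trans (Nat.lt_succ_self m))]
      · intro h j hj
        have h' : P x m = P y m := by
          have h1 := hbP x m
          have h2 := hbP y m
          rw [h1, h2] at h
          exact (List.cons.injEq _ _ _ _ ▸ h).2
        rcases Nat.lt_succ_iff_lt_or_eq.mp hj with h'' | rfl
        · exact (ih.mpr h') j h''
        · have h1 := hbP x j
          have h2 := hbP y j
          rw [h1, h2] at h
          exact (List.cons.injEq _ _ _ _ ▸ h).1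
  have hdistP : ∀ (x y : X) (n : ℕ), P x (n+1) = P y (n+1) → dist x y ≤ (1/2:ℝ)^n := by
    intro x y n h
    have hx : x ∈ D (b x n :: P x n) := by rw [← hbP]; exact hPmem x (n+1)
    have hy : y ∈ D (b x n :: P x n) := by rw [← hbP, h]; exact hPmem y (n+1)
    have := hsmall (b x n) (P x n) x hx y hy
    rwa [hPlen] at this
  have hbinj : Function.Injective b := by
    intro x y hxy
    have hPall : ∀ n, P x n = P y n := by
      intro n
      induction n with
      | zero => rw [hPzero, hPzero]
      | succ m ih => rw [hbP, hbP, hxy, ih]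
    have hd : ∀ n : ℕ, dist x y ≤ (1/2:ℝ)^n := fun n => hdistP x y n (hPall (n+1))
    by_contra hne
    have hpos : 0 < dist x y := dist_pos.mpr hne
    obtain ⟨n, hn⟩ := exists_pow_lt_of_lt_one hpos (by norm_num : (1/2:ℝ) < 1)
    exact absurd (hd n) (not_le.mpr hn)
  -- membership helper
  have hmemP : ∀ (z x : X) (k : ℤ) (n : ℕ), z ∈ D (k :: P x n) → P z n = P x n ∧ b z n = k := by
    intro z x k n hz
    have h1 : P z (n+1) = k :: P x n := by
      have := huniq (k :: P x n) z hz
      rwa [List.length_cons, hPlen] at this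
    rw [hbP z n] at h1
    exact ⟨(List.cons.injEq _ _ _ _ ▸ h1).2, (List.cons.injEq _ _ _ _ ▸ h1).1⟩
  -- the linear order
  letI lo : LinearOrder X := LinearOrder.lift' (fun x => toLex (b x))
    (fun x y hxy => hbinj (by simpa using congrArg ofLex hxy))
  have hlt : ∀ x y : X, x < y ↔ ∃ i, P x i = P y i ∧ b x i < b y i := by
    intro x y
    have h0 : x < y ↔ Pi.Lex (· < ·) (fun {_} => (· < ·)) (b x) (b y) := Iff.rfl
    rw [h0]
    constructor
    · rintro ⟨i, h1, h2⟩; exact ⟨i, (hPagree x y i).mp h1, h2⟩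
    · rintro ⟨i, h1, h2⟩; exact ⟨i, (hPagree x y i).mpr h1, h2⟩
  have hPmono : ∀ (x y : X) (m i : ℕ), m ≤ i → P x i = P y i → P x m = P y m := by
    intro x y m i hmi h
    exact (hPagree x y m).mp fun j hj => ((hPagree x y i).mpr h) j (lt_of_lt_of_le hj hmi)
  -- rays are open
  have hIio : ∀ x : X, IsOpen {z : X | z < x} := by
    intro x
    have heq : {z : X | z < x} = ⋃ (n : ℕ), ⋃ (k : ℤ), ⋃ (_ : k < b x n), D (k :: P x n) := by
      ext z
      simp only [Set.mem_setOf_eq, Set.mem_iUnion]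
      rw [hlt]
      constructor
      · rintro ⟨i, h1, h2⟩
        refine ⟨i, b z i, h2, ?_⟩
        rw [← h1, ← hbP]
        exact hPmem z (i+1)
      · rintro ⟨i, k, hk, hz⟩
        obtain ⟨h1, h2⟩ := hmemP z x k i hz
        exact ⟨i, h1, h2 ▸ hk⟩
    rw [heq]
    exact isOpen_iUnion fun n => isOpen_iUnion fun k => isOpen_iUnion fun _ => (hDinv _).1.2
  have hIoi : ∀ x : X, IsOpen {z : X | x < z} := by
    intro x
    have heq : {z : X | x < z} = ⋃ (n : ℕ), ⋃ (k : ℤ), ⋃ (_ : b x n < k), D (k :: P x n) := by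
      ext z
      simp only [Set.mem_setOf_eq, Set.mem_iUnion]
      rw [hlt]
      constructor
      · rintro ⟨i, h1, h2⟩
        refine ⟨i, b z i, h2, ?_⟩
        rw [h1, ← hbP]
        exact hPmem z (i+1)
      · rintro ⟨i, k, hk, hz⟩
        obtain ⟨h1, h2⟩ := hmemP z x k i hz
        exact ⟨i, h1.symm, h2 ▸ hk⟩
    rw [heq]
    exact isOpen_iUnion fun n => isOpen_iUnion fun k => isOpen_iUnion fun _ => (hDinv _).1.2
  -- convexity of cylinders
  have hconv : ∀ (x w ac c : X) (n : ℕ), P ac (n+1) = P x (n+1) → P c (n+1) = P x (n+1) →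
      ac < w → w < c → P w (n+1) = P x (n+1) := by
    intro x w ac c n hac hc hlt1 hlt2
    obtain ⟨i, hi1, hi2⟩ := (hlt ac w).mp hlt1
    obtain ⟨j, hj1, hj2⟩ := (hlt w c).mp hlt2
    rcases le_or_gt (n+1) i with hni | hni
    · rw [← hPmono ac w (n+1) i hni hi1, hac]
    rcases le_or_gt (n+1) j with hnj | hnj
    · rw [hPmono w c (n+1) j hnj hj1, hc]
    exfalso
    have hbac : ∀ m, m < n+1 → b ac m = b c m :=
      (hPagree ac c (n+1)).mpr (hac.trans hc.symm)
    rcases lt_trichotomy i j with hij | rfl | hij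
    · have : b w i = b c i := ((hPagree w c j).mpr hj1) i hij
      rw [this, ← hbac i hni] at hi2
      exact lt_irrefl _ hi2
    · have := hi2.trans hj2
      rw [hbac i hni] at this
      exact lt_irrefl _ this
    · have : b ac j = b w j := ((hPagree ac w i).mpr hi1) j hij
      rw [← this, hbac j hnj] at hj2
      exact lt_irrefl _ hj2
  -- order neighborhoods inside cylinders
  have hOrdNbhd : ∀ (x : X) (n : ℕ), ∃ a c : X, a < x ∧ x < c ∧
      Set.Ioo a c ⊆ D (P x (n+1)) := by
    intro x n
    obtain ⟨a, ha⟩ := (hDinv ((b x (n+1) - 1) :: P x (n+1))).2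
    obtain ⟨c, hc⟩ := (hDinv ((b x (n+1) + 1) :: P x (n+1))).2
    obtain ⟨ha1, ha2⟩ := hmemP a x (b x (n+1) - 1) (n+1) ha
    obtain ⟨hc1, hc2⟩ := hmemP c x (b x (n+1) + 1) (n+1) hc
    refine ⟨a, c, ?_, ?_, ?_⟩
    · exact (hlt a x).mpr ⟨n+1, ha1, by rw [ha2]; exact sub_one_lt _⟩
    · exact (hlt x c).mpr ⟨n+1, hc1.symm, by rw [hc2]; exact lt_add_one _⟩
    · intro w hw
      have := hconv x w a c n ha1 hc1 hw.1 hw.2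
      rw [← this]
      exact hPmem w (n+1)
  -- cylinders are metric-small
  have hcyl_ball : ∀ (x : X) {ε : ℝ}, 0 < ε → ∃ n : ℕ, D (P x (n+1)) ⊆ Metric.ball x ε := by
    intro x ε hε
    obtain ⟨n, hn⟩ := exists_pow_lt_of_lt_one hε (by norm_num : (1/2:ℝ) < 1)
    refine ⟨n, fun y hy => ?_⟩
    rw [hbP x n] at hy
    have := hsmall (b x n) (P x n) y hy x (by rw [← hbP]; exact hPmem x (n+1))
    rw [hPlen] at this
    rw [Metric.mem_ball]
    exact lt_of_le_of_lt this hn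
  -- order topology
  haveI hOT : OrderTopology X := by
    constructor
    refine le_antisymm (le_generateFrom ?_) ?_
    · rintro s ⟨a, rfl | rfl⟩
      · exact hIoi a
      · exact hIio a
    · rw [TopologicalSpace.le_def]
      intro s hs
      have hch : ∀ x : s, ∃ a c : X, a < (x:X) ∧ (x:X) < c ∧ Set.Ioo a c ⊆ s := by
        rintro ⟨x, hx⟩
        obtain ⟨ε, hε, hball⟩ := Metric.isOpen_iff.mp hs x hx
        obtain ⟨n, hn⟩ := hcyl_ball x hε
        obtain ⟨a, c, ha, hc, h3⟩ := hOrdNbhd x n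
        exact ⟨a, c, ha, hc, h3.trans (hn.trans hball)⟩
      choose fa fc h1 h2 h3 using hch
      have hseq : s = ⋃ x : s, Set.Ioo (fa x) (fc x) := by
        apply Set.eq_of_subset_of_subset
        · intro x hx
          exact Set.mem_iUnion.mpr ⟨⟨x, hx⟩, ⟨h1 ⟨x, hx⟩, h2 ⟨x, hx⟩⟩⟩
        · exact Set.iUnion_subset fun x => h3 x
      change TopologicalSpace.GenerateOpen _ s
      rw [hseq, ← Set.sUnion_range]
      apply TopologicalSpace.GenerateOpen.sUnion
      rintro _ ⟨x, rfl⟩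
      show TopologicalSpace.GenerateOpen _ (Set.Ioo (fa x) (fc x))
      rw [← Set.Ioi_inter_Iio]
      exact TopologicalSpace.GenerateOpen.inter _ _
        (.basic _ ⟨fa x, Or.inl rfl⟩) (.basic _ ⟨fc x, Or.inr rfl⟩)
  -- densely ordered, no endpoints
  haveI : DenselyOrdered X := by
    constructor
    intro x y hxy
    obtain ⟨i, hi1, hi2⟩ := (hlt x y).mp hxy
    rcases lt_or_ge (b x i + 1) (b y i) with h | h
    · obtain ⟨z, hz⟩ := (hDinv ((b x i + 1) :: P x i)).2
      obtain ⟨hz1, hz2⟩ := hmemP z x (b x i + 1) i hz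
      refine ⟨z, (hlt x z).mpr ⟨i, hz1.symm, by rw [hz2]; exact lt_add_one _⟩,
        (hlt z y).mpr ⟨i, hz1.trans hi1, by rw [hz2]; exact h⟩⟩
    · have hby : b y i = b x i + 1 := le_antisymm h (by omega)
      obtain ⟨z, hz⟩ := (hDinv ((b x (i+1) + 1) :: P x (i+1))).2
      obtain ⟨hz1, hz2⟩ := hmemP z x (b x (i+1) + 1) (i+1) hz
      have hzi : P z i = P x i := hPmono z x i (i+1) (Nat.le_succ i) hz1
      have hbzi : b z i = b x i := ((hPagree z x (i+1)).mpr hz1) i (Nat.lt_succ_self i)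
      refine ⟨z, (hlt x z).mpr ⟨i+1, hz1.symm, by rw [hz2]; exact lt_add_one _⟩,
        (hlt z y).mpr ⟨i, hzi.trans hi1, by rw [hbzi]; exact hi2⟩⟩
  haveI : NoMaxOrder X := by
    constructor
    intro x
    obtain ⟨z, hz⟩ := (hDinv ((b x 0 + 1) :: P x 0)).2
    obtain ⟨hz1, hz2⟩ := hmemP z x (b x 0 + 1) 0 hz
    exact ⟨z, (hlt x z).mpr ⟨0, hz1.symm, by rw [hz2]; exact lt_add_one _⟩⟩
  haveI : NoMinOrder X := by
    constructor
    intro x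
    obtain ⟨z, hz⟩ := (hDinv ((b x 0 - 1) :: P x 0)).2
    obtain ⟨hz1, hz2⟩ := hmemP z x (b x 0 - 1) 0 hz
    exact ⟨z, (hlt z x).mpr ⟨0, hz1, by rw [hz2]; exact sub_one_lt _⟩⟩
  obtain ⟨e⟩ := Order.iso_of_countable_dense X ℚ
  exact ⟨e.toHomeomorph⟩


end Sierpinski

theorem sierpinski_main (X : Type*) [TopologicalSpace X] [Nonempty X] [Countable X]
    [TopologicalSpace.MetrizableSpace X]
    (hperf : ∀ x : X, ¬ IsOpen ({x} : Set X)) : Nonempty (X ≃ₜ ℚ) := by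
  letI : MetricSpace X := TopologicalSpace.metrizableSpaceMetric X
  exact sierpinski_metric hperf hperf

lemma pf_countable : Countable ↥Pf := by
  have hPf : Pf = ⋃ n : ℕ, {α : ℕ → Bool | ∀ m, n ≤ m → α m = false} := by
    ext α
    simp [Pf, Filter.eventually_atTop]
  have hc : Pf.Countable := by
    rw [hPf]
    refine Set.countable_iUnion fun n => ?_
    rw [← Set.countable_coe_iff]
    have hinj : Function.Injective
        (fun α : {α : ℕ → Bool | ∀ m, n ≤ m → α m = false} => (fun i : Fin n => (α : ℕ → Bool) i)) := by
      rintro ⟨α, hα⟩ ⟨β, hβ⟩ h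
      ext m
      show α m = β m
      rcases lt_or_ge m n with hm | hm
      · exact congrFun h ⟨m, hm⟩
      · rw [hα m hm, hβ m hm]
    exact hinj.countable
  exact hc.to_subtype

lemma pf_perfect : ∀ x : ↥Pf, ¬ IsOpen ({x} : Set ↥Pf) := by
  rintro ⟨α, hα⟩ hopen
  rw [isOpen_induced_iff] at hopen
  obtain ⟨U, hU, hpre⟩ := hopen
  have hαU : α ∈ U := by
    have : (⟨α, hα⟩ : ↥Pf) ∈ Subtype.val ⁻¹' U := by rw [hpre]; rfl
    exact this
  obtain ⟨I, u, h1, h2⟩ := isOpen_pi_iff.mp hU α hαU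
  obtain ⟨N, hN⟩ := Filter.eventually_atTop.mp hα
  set n := max (I.sup id + 1) N with hn
  have hnI : n ∉ I := by
    intro h
    have : id n ≤ I.sup id := Finset.le_sup h
    simp only [id] at this
    omega
  have hαn : α n = false := hN n (le_max_right _ _)
  set β := Function.update α n true with hβ
  have hβPf : β ∈ Pf := by
    show ∀ᶠ k in Filter.atTop, β k = false
    rw [Filter.eventually_atTop]
    refine ⟨max (n+1) N, fun m hm => ?_⟩
    simp only [ge_iff_le, sup_le_iff] at hm
    rw [hβ, Function.update_of_ne (by omega : m ≠ n)]
    exact hN m hm.2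
  have hβU : β ∈ U := by
    apply h2
    intro i hi
    have : β i = α i := Function.update_of_ne (by rintro rfl; exact hnI hi) _ _
    rw [this]
    exact (h1 i hi).2
  have : (⟨β, hβPf⟩ : ↥Pf) ∈ Subtype.val ⁻¹' U := hβU
  rw [hpre] at this
  have hcontra : β = α := congrArg Subtype.val this
  have : β n = α n := congrFun hcontra n
  rw [hβ, Function.update_self, hαn] at this
  simp at this


/-- Sierpiński's theorem: a nonempty countable metrizable perfect space is
homeomorphic to `ℚ`, and in particular to `ℙ_f`. -/
theorem stmt6 (X : Type*) [TopologicalSpace X] [Nonempty X] [Countable X]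
    [TopologicalSpace.MetrizableSpace X]
    (hperf : ∀ x : X, ¬ IsOpen ({x} : Set X)) :
    Nonempty (X ≃ₜ ℚ) ∧ Nonempty (X ≃ₜ Pf) := by
  haveI : Nonempty ↥Pf := ⟨⟨fun _ => false, Filter.Eventually.of_forall fun _ => rfl⟩⟩
  haveI : Countable ↥Pf := pf_countable
  obtain ⟨e1⟩ := sierpinski_main X hperf
  obtain ⟨e2⟩ := sierpinski_main ↥Pf pf_perfect
  exact ⟨⟨e1⟩, ⟨e1.trans e2.symm⟩⟩
end

section
/- Let R be a relation on 2^ω all of whose vertical and horizontal sections are nowhere dense. Then there exists an injective continuous map f : 2^ω → 2^ω with f⁻¹(ℙ_f) = ℙ_f such that (f(α), f(β)) ∉ R whenever α ≠ β are both in ℙ_f. -/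
namespace S7

/-- extend a finite string by zeros -/
def ext0 (v : List Bool) : ℕ → Bool := fun n => v.getD n false

/-- first `n` values of `α` as a list -/
def restrict (α : ℕ → Bool) (n : ℕ) : List Bool := List.ofFn (fun i : Fin n => α i)

@[simp] lemma length_restrict (α n) : (restrict α n).length = n := by simp [restrict]

@[simp] lemma restrict_getElem (α : ℕ → Bool) (n i : ℕ) (h : i < (restrict α n).length) :
    (restrict α n)[i] = α i := by simp [restrict]

lemma restrict_succ (α n) : restrict α (n+1) = restrict α n ++ [α n] := by
  rw [restrict, List.ofFn_succ']; simp [restrict, Function.comp]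

lemma restrict_prefix (α : ℕ → Bool) {a b : ℕ} (h : a ≤ b) : restrict α a <+: restrict α b := by
  induction b with
  | zero => simp_all
  | succ b ih =>
    rcases Nat.lt_or_ge a (b+1) with h' | h'
    · exact (ih (by omega)).trans ⟨[α b], (restrict_succ α b).symm⟩
    · have : a = b + 1 := by omega
      subst this; exact List.prefix_refl _

/-- cylinder determined by a finite string -/
def cyl (v : List Bool) : Set (ℕ → Bool) := {α | restrict α v.length = v}

lemma mem_cyl_iff {v : List Bool} {α : ℕ → Bool} : α ∈ cyl v ↔ ∀ i : ℕ, ∀ h : i < v.length, α i = v[i] := by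
  constructor
  · intro hm i h
    have := List.getElem_of_eq hm (i := i) (by simpa using h)
    simpa using this
  · intro h
    apply List.ext_getElem (by simp)
    intro i h1 h2
    simpa using h i h2

lemma isOpen_cyl (v : List Bool) : IsOpen (cyl v) := by
  have : cyl v = ⋂ i : Fin v.length, {α : ℕ → Bool | α i = v[i]} := by
    ext α; simp [mem_cyl_iff, Fin.forall_iff]
  rw [this]
  refine isOpen_iInter_of_finite fun i => ?_
  exact IsOpen.preimage (f := fun α : ℕ → Bool => α (i : ℕ)) (continuous_apply (i : ℕ))
    (isOpen_discrete {v[(i:ℕ)]})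

lemma ext0_mem_cyl (v : List Bool) : ext0 v ∈ cyl v := by
  rw [mem_cyl_iff]; intro i h; show v.getD i false = v[i]
  rw [List.getD_eq_getElem _ _ h]

/-- every open set around a point contains a cylinder around the point -/
lemma exists_cyl_subset {U : Set (ℕ → Bool)} (hU : IsOpen U) {γ : ℕ → Bool} (hγ : γ ∈ U) :
    ∃ N : ℕ, {α : ℕ → Bool | restrict α N = restrict γ N} ⊆ U := by
  rw [isOpen_pi_iff] at hU
  obtain ⟨I, u, hu, hsub⟩ := hU γ hγ
  refine ⟨I.sup id + 1, fun α hα => hsub ?_⟩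
  intro i hi
  have hlt : i < I.sup id + 1 := Nat.lt_succ_of_le (Finset.le_sup (f := id) hi)
  have : α i = γ i := by
    have h1 := List.getElem_of_eq (show restrict α (I.sup id + 1) = restrict γ (I.sup id + 1) from hα)
      (i := i) (by simpa using hlt)
    simpa using h1
  rw [this]; exact (hu i hi).2

/-- closed sets with empty interior: union still has empty interior -/
lemma interior_union_empty {A B : Set (ℕ → Bool)} (hA : IsClosed A) (hB : IsClosed B)
    (hiA : interior A = ∅) (hiB : interior B = ∅) : interior (A ∪ B) = ∅ := by
  have h1 : interior (A ∪ B) ∩ Aᶜ ⊆ interior B := by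
    apply interior_maximal
    · intro x hx
      rcases (interior_subset hx.1) with h | h
      · exact absurd h hx.2
      · exact h
    · exact isOpen_interior.inter hA.isOpen_compl
  have h2 : interior (A ∪ B) ⊆ A := by
    intro x hx
    by_contra hxA
    exact absurd (h1 ⟨hx, hxA⟩) (by simp [hiB])
  have h3 : interior (A ∪ B) ⊆ interior A := interior_maximal h2 isOpen_interior
  rw [hiA] at h3
  exact Set.eq_empty_iff_forall_notMem.2 fun x hx => h3 hx

/-- main choice lemma: extend `w` to avoid a finite union of closed sets with empty interior -/
lemma avoid (w : List Bool) (n : ℕ) (C : ℕ → Set (ℕ → Bool))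
    (hC : ∀ k < n, IsClosed (C k) ∧ interior (C k) = ∅) :
    ∃ v : List Bool, w <+: v ∧ w.length < v.length ∧
      ext0 v ∉ ⋃ k, ⋃ (_ : k < n), C k := by
  set B := ⋃ k, ⋃ (_ : k < n), C k with hBdef
  have key : ∀ m : ℕ, m ≤ n → IsClosed (⋃ k, ⋃ (_ : k < m), C k) ∧ interior (⋃ k, ⋃ (_ : k < m), C k) = ∅ := by
    intro m
    induction m with
    | zero => intro _; simp
    | succ m ih =>
      intro hm
      have hm' : m ≤ n := by omega
      have hstep : (⋃ k, ⋃ (_ : k < m + 1), C k) = (⋃ k, ⋃ (_ : k < m), C k) ∪ C m := by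
        ext x; simp only [Set.mem_iUnion, Set.mem_union]
        constructor
        · rintro ⟨k, hk, hx⟩
          rcases Nat.lt_or_ge k m with h | h
          · exact Or.inl ⟨k, h, hx⟩
          · have : k = m := by omega
            subst this; exact Or.inr hx
        · rintro (⟨k, hk, hx⟩ | hx)
          · exact ⟨k, by omega, hx⟩
          · exact ⟨m, by omega, hx⟩
      obtain ⟨hc, hi⟩ := ih hm'
      obtain ⟨hc2, hi2⟩ := hC m (by omega)
      rw [hstep]
      exact ⟨hc.union hc2, interior_union_empty hc hc2 hi hi2⟩
  obtain ⟨hBc, hBi⟩ := key n le_rfl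
  have hdense : Dense Bᶜ := by rwa [interior_eq_empty_iff_dense_compl] at hBi
  have hne : (cyl w).Nonempty := ⟨ext0 w, ext0_mem_cyl w⟩
  obtain ⟨γ, hγw, hγB⟩ := hdense.inter_open_nonempty (cyl w) (isOpen_cyl w) hne
  obtain ⟨N, hN⟩ := exists_cyl_subset hBc.isOpen_compl hγB
  set M := max N (w.length + 1) with hM
  refine ⟨restrict γ M, ?_, ?_, ?_⟩
  · have : restrict γ w.length <+: restrict γ M := restrict_prefix γ (by omega)
    rwa [show restrict γ w.length = w from hγw] at this
  · simp only [length_restrict]; omega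
  · apply hN
    show restrict (ext0 (restrict γ M)) N = restrict γ N
    apply List.ext_getElem (by simp)
    intro i h1 h2
    have hiM : i < M := by simp at h1; omega
    simp only [restrict_getElem]
    show ext0 (restrict γ M) i = γ i
    unfold ext0
    rw [List.getD_eq_getElem _ _ (by simpa using hiM)]
    simp


/-! ### the encoding -/

def m (t : List Bool) : ℕ := t.foldl (fun n b => 2*n + cond b 2 1) 0

@[simp] lemma m_nil : m [] = 0 := rfl

lemma m_concat (u : List Bool) (b : Bool) : m (u ++ [b]) = 2 * m u + cond b 2 1 := by
  simp [m, List.foldl_append]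

lemma m_lt_concat (u : List Bool) (b : Bool) : m u < m (u ++ [b]) := by
  rw [m_concat]; cases b <;> simp only [cond_true, cond_false] <;> omega

lemma m_pos_concat (u : List Bool) (b : Bool) : 0 < m (u ++ [b]) := by
  rw [m_concat]; cases b <;> simp

lemma m_inj : ∀ s t : List Bool, m s = m t → s = t := by
  intro s
  induction s using List.reverseRecOn with
  | nil =>
    intro t
    induction t using List.reverseRecOn with
    | nil => intro _; rfl
    | append_singleton u b _ =>
      intro h
      simp only [m_nil] at h
      exact absurd h.symm (by have := m_pos_concat u b; omega)
  | append_singleton u b ih =>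
    intro t
    induction t using List.reverseRecOn with
    | nil =>
      intro h
      simp only [m_nil] at h
      exact absurd h (by have := m_pos_concat u b; omega)
    | append_singleton u' b' _ =>
      intro h
      rw [m_concat, m_concat] at h
      have hb : b = b' := by cases b <;> cases b' <;> simp at h ⊢ <;> omega
      subst hb
      have : m u = m u' := by cases b <;> simp at h <;> omega
      rw [ih u' this]

/-! ### canonical strings -/

def canon (t : List Bool) : Prop := t.getLast? ≠ some false

instance : DecidablePred canon := fun t => by unfold canon; infer_instance

@[simp] lemma canon_nil : canon [] := by simp [canon]

lemma canon_concat_true (t : List Bool) : canon (t ++ [true]) := by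
  simp [canon, List.getLast?_concat]

lemma not_canon_concat_false (t : List Bool) : ¬ canon (t ++ [false]) := by
  simp [canon, List.getLast?_concat]

/-- flip the last bit -/
def flipLast (v : List Bool) : List Bool := v.dropLast ++ [!(v.getLastD false)]

@[simp] lemma length_flipLast (v : List Bool) (h : v ≠ []) : (flipLast v).length = v.length := by
  have := List.length_pos_iff.2 h
  rw [flipLast]
  simp only [List.length_append, List.length_dropLast, List.length_singleton]
  omega

/-! ### sections -/

section Construction

variable (R : Set ((ℕ → Bool) × (ℕ → Bool)))

/-- the closed obstruction set attached to a point -/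
def Cs (γ : ℕ → Bool) : Set (ℕ → Bool) :=
  closure {β | (γ, β) ∈ R} ∪ closure {β | (β, γ) ∈ R}

lemma Cs_closed (γ : ℕ → Bool) : IsClosed (Cs R γ) := isClosed_closure.union isClosed_closure

variable (hV : ∀ α, IsNowhereDense {β | (α, β) ∈ R})
variable (hH : ∀ α, IsNowhereDense {β | (β, α) ∈ R})

include hV hH

lemma Cs_int (γ : ℕ → Bool) : interior (Cs R γ) = ∅ := by
  apply interior_union_empty isClosed_closure isClosed_closure
  · have := hV γ
    rwa [IsNowhereDense] at this
  · have := hH γ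
    rwa [IsNowhereDense] at this

def CtF (Ys : ℕ → ℕ → Bool) (n : ℕ) : ℕ → Set (ℕ → Bool) := fun k =>
  if k < n then Cs R (Ys k) else ∅

lemma CtF_good (Ys : ℕ → ℕ → Bool) (n : ℕ) :
    ∀ k < n, IsClosed (CtF R Ys n k) ∧ interior (CtF R Ys n k) = ∅ := by
  intro k hk
  rw [CtF, if_pos hk]
  exact ⟨Cs_closed R _, Cs_int R hV hH _⟩

noncomputable def pick (w : List Bool) (Ys : ℕ → ℕ → Bool) (n : ℕ) : List Bool :=
  (avoid w n (CtF R Ys n) (CtF_good R hV hH Ys n)).choose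

lemma pick_prefix (w : List Bool) (Ys : ℕ → ℕ → Bool) (n : ℕ) :
    w <+: pick R hV hH w Ys n :=
  (avoid w n (CtF R Ys n) (CtF_good R hV hH Ys n)).choose_spec.1

lemma pick_long (w : List Bool) (Ys : ℕ → ℕ → Bool) (n : ℕ) :
    w.length < (pick R hV hH w Ys n).length :=
  (avoid w n (CtF R Ys n) (CtF_good R hV hH Ys n)).choose_spec.2.1

lemma pick_avoid (w : List Bool) (Ys : ℕ → ℕ → Bool) (n : ℕ) :
    ∀ k < n, ext0 (pick R hV hH w Ys n) ∉ Cs R (Ys k) := by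
  intro k hk hmem
  apply (avoid w n (CtF R Ys n) (CtF_good R hV hH Ys n)).choose_spec.2.2
  refine Set.mem_iUnion.2 ⟨k, Set.mem_iUnion.2 ⟨hk, ?_⟩⟩
  rw [CtF, if_pos hk]
  exact hmem


open Classical in
/-- The fusion construction. -/
noncomputable def str (t : List Bool) : List Bool :=
  if hne : t = [] then []
  else
    let u := t.dropLast
    let w := str u
    if canon u then
      let v := pick R hV hH w
        (fun k =>
          if hk : k < m u then
            (if h : ∃ t', canon t' ∧ m t' = k then ext0 (str (h.choose ++ [false]))
             else fun _ => false)
          else fun _ => false) (m u)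
      if t.getLast hne then flipLast v ++ [true] else v
    else w ++ [t.getLast hne]
  termination_by m t
  decreasing_by
  · have : t = t.dropLast ++ [t.getLast hne] := (List.dropLast_append_getLast hne).symm
    calc m t.dropLast < m (t.dropLast ++ [t.getLast hne]) := m_lt_concat _ _
    _ = m t := by rw [← this]
  · have h1 : t = t.dropLast ++ [t.getLast hne] := (List.dropLast_append_getLast hne).symm
    have h2 : m (h.choose ++ [false]) = 2 * m h.choose + 1 := by
      rw [m_concat]; rfl
    have h5 : m h.choose = k := h.choose_spec.2
    have h4 : m t.dropLast = m u := rfl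
    have h3 : m t = 2 * m t.dropLast + cond (t.getLast hne) 2 1 := by
      conv_lhs => rw [h1]
      rw [m_concat]
    rw [h2, h3, h4]
    cases t.getLast hne <;> simp only [cond_true, cond_false] <;> omega

open Classical in
noncomputable def YsD (n : ℕ) : ℕ → ℕ → Bool := fun k =>
  if _hk : k < n then
    (if h : ∃ t', canon t' ∧ m t' = k then ext0 (str R hV hH (h.choose ++ [false]))
     else fun _ => false)
  else fun _ => false

lemma str_nil : str R hV hH [] = [] := by rw [str]; rfl

lemma str_concat (t : List Bool) (b : Bool) : str R hV hH (t ++ [b]) =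
    if canon t then
      (if b then flipLast (pick R hV hH (str R hV hH t) (YsD R hV hH (m t)) (m t)) ++ [true]
       else pick R hV hH (str R hV hH t) (YsD R hV hH (m t)) (m t))
    else str R hV hH t ++ [b] := by
  rw [str]
  have hne : t ++ [b] ≠ [] := by simp
  rw [dif_neg hne]
  simp only [List.dropLast_concat, List.getLast_concat]
  rfl

lemma str_noncanon (t : List Bool) (b : Bool) (h : ¬ canon t) :
    str R hV hH (t ++ [b]) = str R hV hH t ++ [b] := by
  rw [str_concat, if_neg h]

lemma str_canon_false (t : List Bool) (h : canon t) :
    str R hV hH (t ++ [false]) = pick R hV hH (str R hV hH t) (YsD R hV hH (m t)) (m t) := by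
  rw [str_concat, if_pos h]; rfl

lemma str_canon_true (t : List Bool) (h : canon t) :
    str R hV hH (t ++ [true]) =
      flipLast (pick R hV hH (str R hV hH t) (YsD R hV hH (m t)) (m t)) ++ [true] := by
  rw [str_concat, if_pos h]; rfl

lemma YsD_eval (n : ℕ) (t' : List Bool) (ht' : canon t') (hlt : m t' < n) :
    YsD R hV hH n (m t') = ext0 (str R hV hH (t' ++ [false])) := by
  rw [YsD]
  rw [dif_pos hlt]
  have hex : ∃ t'', canon t'' ∧ m t'' = m t' := ⟨t', ht', rfl⟩
  rw [dif_pos hex]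
  have := hex.choose_spec
  have : hex.choose = t' := m_inj _ _ this.2
  rw [this]

/-- basic growth lemma -/
lemma str_grow (t : List Bool) (b : Bool) :
    str R hV hH t <+: str R hV hH (t ++ [b]) ∧
    (str R hV hH t).length < (str R hV hH (t ++ [b])).length := by
  by_cases h : canon t
  · set w := str R hV hH t with hw
    set v := pick R hV hH w (YsD R hV hH (m t)) (m t) with hv
    have hpre : w <+: v := pick_prefix R hV hH _ _ _
    have hlen : w.length < v.length := pick_long R hV hH _ _ _
    have hvne : v ≠ [] := by
      intro hc; rw [hc] at hlen; simp at hlen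
    cases b
    · rw [str_canon_false R hV hH t h, ← hv]
      exact ⟨hpre, hlen⟩
    · rw [str_canon_true R hV hH t h, ← hv]
      constructor
      · rw [List.prefix_iff_eq_take] at hpre ⊢
        rw [List.take_append_of_le_length, flipLast,
          List.take_append_of_le_length, List.dropLast_eq_take, List.take_take]
        · rw [min_eq_left (by omega)]; exact hpre
        · simp [List.length_dropLast]; omega
        · rw [length_flipLast v hvne]; omega
      · rw [List.length_append, length_flipLast v hvne]
        simp; omega
  · rw [str_noncanon R hV hH t b h]
    exact ⟨⟨[b], rfl⟩, by simp⟩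

lemma str_prefix_of_prefix {t t' : List Bool} (h : t <+: t') :
    str R hV hH t <+: str R hV hH t' := by
  obtain ⟨r, rfl⟩ := h
  induction r using List.reverseRecOn with
  | nil => simp
  | append_singleton r b ih =>
    calc str R hV hH t <+: str R hV hH (t ++ r) := ih
    _ <+: str R hV hH ((t ++ r) ++ [b]) := (str_grow R hV hH _ _).1
    _ = str R hV hH (t ++ (r ++ [b])) := by rw [List.append_assoc]

lemma str_length_ge (t : List Bool) : t.length ≤ (str R hV hH t).length := by
  induction t using List.reverseRecOn with
  | nil => simp
  | append_singleton u b ih =>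
    have := (str_grow R hV hH u b).2
    simp only [List.length_append, List.length_singleton]
    omega

/-- the two children are incompatible -/
lemma str_incompat (t : List Bool) :
    ∃ j, j < (str R hV hH (t ++ [false])).length ∧ j < (str R hV hH (t ++ [true])).length ∧
      (str R hV hH (t ++ [false])).getD j false ≠ (str R hV hH (t ++ [true])).getD j false := by
  by_cases h : canon t
  · set v := pick R hV hH (str R hV hH t) (YsD R hV hH (m t)) (m t) with hv
    have hlen : (str R hV hH t).length < v.length := pick_long R hV hH _ _ _
    have hvne : v ≠ [] := by intro hc; rw [hc] at hlen; simp at hlen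
    have hvpos : 0 < v.length := by omega
    refine ⟨v.length - 1, ?_, ?_, ?_⟩
    · rw [str_canon_false R hV hH t h, ← hv]
      omega
    · rw [str_canon_true R hV hH t h, ← hv, List.length_append, length_flipLast v hvne]
      simp only [List.length_singleton]
      omega
    · rw [str_canon_false R hV hH t h, str_canon_true R hV hH t h, ← hv]
      have e1 : v.getD (v.length - 1) false = v.getLast hvne := by
        rw [List.getD_eq_getElem _ _ (by omega)]
        exact (List.getLast_eq_getElem hvne).symm
      have e2 : (flipLast v ++ [true]).getD (v.length - 1) false = !(v.getLastD false) := by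
        rw [flipLast, List.append_assoc,
          List.getD_append_right _ _ _ _ (by simp only [List.length_dropLast]; omega)]
        simp only [List.length_dropLast]
        have : v.length - 1 - (v.length - 1) = 0 := by omega
        rw [this]
        rfl
      rw [e1, e2, List.getLastD_eq_getLast?, List.getLast?_eq_getLast hvne]
      simp
  · refine ⟨(str R hV hH t).length, ?_, ?_, ?_⟩
    · rw [str_noncanon R hV hH t false h]; simp
    · rw [str_noncanon R hV hH t true h]; simp
    · rw [str_noncanon R hV hH t false h, str_noncanon R hV hH t true h,
        List.getD_append_right _ _ _ _ (le_refl _), List.getD_append_right _ _ _ _ (le_refl _)]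
      simp

/-! ### the map -/

noncomputable def fmap (α : ℕ → Bool) : ℕ → Bool :=
  fun n => (str R hV hH (List.ofFn (fun i : Fin (n+1) => α i))).getD n false

lemma fmap_def (α : ℕ → Bool) (n : ℕ) :
    fmap R hV hH α n = (str R hV hH (restrict α (n+1))).getD n false := rfl

lemma fmap_continuous : Continuous (fmap R hV hH) := by
  apply continuous_pi
  intro n
  have h1 : Continuous fun α : ℕ → Bool => (fun i : Fin (n+1) => α i) :=
    continuous_pi fun i => continuous_apply (i : ℕ)
  exact Continuous.comp
    (continuous_of_discreteTopology
      (f := fun g : Fin (n+1) → Bool => (str R hV hH (List.ofFn g)).getD n false)) h1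

lemma fmap_agree (α : ℕ → Bool) (k j : ℕ) (hj : j < (str R hV hH (restrict α k)).length) :
    fmap R hV hH α j = (str R hV hH (restrict α k)).getD j false := by
  rcases le_or_gt k (j+1) with h | h
  · obtain ⟨r, hr⟩ := str_prefix_of_prefix R hV hH (restrict_prefix α h)
    rw [fmap_def, ← hr, List.getD_append _ _ _ _ hj]
  · obtain ⟨r, hr⟩ := str_prefix_of_prefix R hV hH (restrict_prefix α (le_of_lt h))
    have hlen : j < (str R hV hH (restrict α (j+1))).length := by
      have := str_length_ge R hV hH (restrict α (j+1))
      simp only [length_restrict] at this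
      omega
    rw [fmap_def, ← hr, List.getD_append _ _ _ _ hlen]

lemma fmap_injective : Function.Injective (fmap R hV hH) := by
  intro α β hfe
  by_contra hne
  have hex : ∃ i, α i ≠ β i := by
    by_contra hc; push_neg at hc; exact hne (funext hc)
  classical
  set i := Nat.find hex with hidef
  have hi : α i ≠ β i := Nat.find_spec hex
  have hmin : ∀ j < i, α j = β j := fun j hj => not_not.1 (Nat.find_min hex hj)
  have hres : restrict α i = restrict β i := by
    apply List.ext_getElem (by simp)
    intro j h1 h2
    simp only [restrict_getElem]
    exact hmin j (by simpa using h1)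
  obtain ⟨j, hj1, hj2, hj3⟩ := str_incompat R hV hH (restrict α i)
  have e2 : restrict β (i+1) = restrict α i ++ [β i] := by rw [restrict_succ, hres]
  cases hab : α i <;> cases hbb : β i
  · rw [hab, hbb] at hi; exact hi rfl
  · have f1 : fmap R hV hH α j = (str R hV hH (restrict α i ++ [false])).getD j false := by
      have := fmap_agree R hV hH α (i+1) j (by rw [restrict_succ, hab]; exact hj1)
      rwa [restrict_succ, hab] at this
    have f2 : fmap R hV hH β j = (str R hV hH (restrict α i ++ [true])).getD j false := by
      have := fmap_agree R hV hH β (i+1) j (by rw [e2, hbb]; exact hj2)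
      rwa [e2, hbb] at this
    exact hj3 (by rw [← f1, ← f2, hfe])
  · have f1 : fmap R hV hH α j = (str R hV hH (restrict α i ++ [true])).getD j false := by
      have := fmap_agree R hV hH α (i+1) j (by rw [restrict_succ, hab]; exact hj2)
      rwa [restrict_succ, hab] at this
    have f2 : fmap R hV hH β j = (str R hV hH (restrict α i ++ [false])).getD j false := by
      have := fmap_agree R hV hH β (i+1) j (by rw [e2, hbb]; exact hj1)
      rwa [e2, hbb] at this
    exact hj3 (by rw [← f2, ← f1, hfe])
  · rw [hab, hbb] at hi; exact hi rfl

/-! ### behaviour on eventually-zero sequences -/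

omit hV hH in
lemma getD_of_append_replicate (L : List Bool) (k n : ℕ) :
    (L ++ List.replicate k false).getD n false = L.getD n false := by
  rcases Nat.lt_or_ge n L.length with h | h
  · rw [List.getD_append _ _ _ _ h]
  · rw [List.getD_append_right _ _ _ _ h, List.getD_eq_default _ _ h]
    rcases Nat.lt_or_ge (n - L.length) k with h2 | h2
    · rw [List.getD_eq_getElem _ _ (by simpa using h2)]
      simp
    · rw [List.getD_eq_default _ _ (by simpa using h2)]

lemma canonical_data {α : ℕ → Bool} (hα : ∀ᶠ n in Filter.atTop, α n = false) :
    ∃ T : List Bool, canon T ∧ α = ext0 T ∧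
      fmap R hV hH α = ext0 (str R hV hH (T ++ [false])) := by
  classical
  have hex : ∃ N, ∀ n, n ≥ N → α n = false := by
    simpa [Filter.eventually_atTop] using hα
  set N := Nat.find hex with hNdef
  have hN : ∀ n, n ≥ N → α n = false := Nat.find_spec hex
  refine ⟨restrict α N, ?_, ?_, ?_⟩
  · -- canonical
    cases hNc : N with
    | zero => simp [restrict]
    | succ M =>
      have hMlt : M < N := by omega
      have := Nat.find_min hex (by omega : M < N)
      push_neg at this
      obtain ⟨n, hn1, hn2⟩ := this
      have hnM : n = M := by
        by_contra hc
        exact hn2 (hN n (by omega))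
      have hMt : α M = true := by
        have hMne : α M ≠ false := hnM ▸ hn2
        cases hM2 : α M
        · exact absurd hM2 hMne
        · rfl
      rw [restrict_succ, hMt]
      exact canon_concat_true _
  · -- α = ext0 (restrict α N)
    funext n
    rcases Nat.lt_or_ge n N with h | h
    · rw [ext0, List.getD_eq_getElem _ _ (by simpa using h)]
      simp
    · rw [ext0, List.getD_eq_default _ _ (by simpa using h)]
      exact (hN n h)
  · -- the value of fmap
    have hT : restrict α (N+1) = restrict α N ++ [false] := by
      rw [restrict_succ, hN N (le_refl N)]
    have claim : ∀ k, str R hV hH (restrict α (N+1+k)) =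
        str R hV hH (restrict α (N+1)) ++ List.replicate k false := by
      intro k
      induction k with
      | zero => simp
      | succ k ih =>
        have hend : restrict α (N+1+k) = restrict α (N+k) ++ [false] := by
          have : N+1+k = (N+k)+1 := by omega
          rw [this, restrict_succ, hN (N+k) (by omega)]
        have hnc : ¬ canon (restrict α (N+1+k)) := by
          rw [hend]; exact not_canon_concat_false _
        have : N+1+(k+1) = (N+1+k)+1 := by omega
        rw [this, restrict_succ, hN (N+1+k) (by omega), str_noncanon R hV hH _ false hnc, ih,
          List.append_assoc, ← List.replicate_succ']
    funext n
    have hbig : n < (str R hV hH (restrict α (N+1+(n+1)))).length := by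
      have h1 := str_length_ge R hV hH (restrict α (N+1+(n+1)))
      simp only [length_restrict] at h1
      omega
    rw [fmap_agree R hV hH α (N+1+(n+1)) n hbig, claim (n+1), hT]
    simp only [ext0]
    rw [getD_of_append_replicate]

lemma fmap_mem_Pf {α : ℕ → Bool} (hα : ∀ᶠ n in Filter.atTop, α n = false) :
    ∀ᶠ n in Filter.atTop, fmap R hV hH α n = false := by
  obtain ⟨T, _, _, hval⟩ := canonical_data R hV hH hα
  rw [hval]
  rw [Filter.eventually_atTop]
  refine ⟨(str R hV hH (T ++ [false])).length, fun n hn => ?_⟩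
  rw [ext0, List.getD_eq_default _ _ hn]

/-- one more true appears after each true bit -/
lemma str_true_tail (t : List Bool) :
    ∃ z : List Bool, str R hV hH (t ++ [true]) = z ++ [true] ∧
      (str R hV hH t).length ≤ z.length := by
  by_cases h : canon t
  · set v := pick R hV hH (str R hV hH t) (YsD R hV hH (m t)) (m t) with hv
    have hlen : (str R hV hH t).length < v.length := pick_long R hV hH _ _ _
    have hvne : v ≠ [] := by intro hc; rw [hc] at hlen; simp at hlen
    refine ⟨flipLast v, str_canon_true R hV hH t h, ?_⟩
    rw [length_flipLast v hvne]
    omega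
  · exact ⟨str R hV hH t, str_noncanon R hV hH t true h, le_refl _⟩

lemma fmap_not_mem_Pf {α : ℕ → Bool} (hα : ¬ ∀ᶠ n in Filter.atTop, α n = false) :
    ¬ ∀ᶠ n in Filter.atTop, fmap R hV hH α n = false := by
  intro hmem
  rw [Filter.eventually_atTop] at hmem
  obtain ⟨M, hM⟩ := hmem
  have hfreq : ∀ N, ∃ n, N ≤ n ∧ α n = true := by
    intro N
    by_contra hc
    push_neg at hc
    apply hα
    rw [Filter.eventually_atTop]
    exact ⟨N, fun n hn => by
      cases hxn : α n
      · rfl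
      · exact absurd hxn (hc n hn)⟩
  obtain ⟨n, hn1, hn2⟩ := hfreq M
  obtain ⟨z, hz1, hz2⟩ := str_true_tail R hV hH (restrict α n)
  have hlenz : n ≤ z.length := by
    have := str_length_ge R hV hH (restrict α n)
    simp only [length_restrict] at this
    omega
  have hsucc : restrict α (n+1) = restrict α n ++ [true] := by
    rw [restrict_succ, hn2]
  have hval : fmap R hV hH α z.length = true := by
    have hlt : z.length < (str R hV hH (restrict α (n+1))).length := by
      rw [hsucc, hz1]; simp
    rw [fmap_agree R hV hH α (n+1) z.length hlt, hsucc, hz1,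
      List.getD_append_right _ _ _ _ (le_refl _)]
    simp
  have := hM z.length (by omega)
  rw [hval] at this
  exact Bool.noConfusion this

lemma fmap_avoid {α β : ℕ → Bool} (hα : ∀ᶠ n in Filter.atTop, α n = false)
    (hβ : ∀ᶠ n in Filter.atTop, β n = false) (hne : α ≠ β) :
    (fmap R hV hH α, fmap R hV hH β) ∉ R := by
  obtain ⟨Tα, hcα, hext_α, hval_α⟩ := canonical_data R hV hH hα
  obtain ⟨Tβ, hcβ, hext_β, hval_β⟩ := canonical_data R hV hH hβ
  have hTne : Tα ≠ Tβ := by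
    intro hc
    exact hne (by rw [hext_α, hext_β, hc])
  have hmne : m Tα ≠ m Tβ := fun hc => hTne (m_inj _ _ hc)
  have key : ∀ T T' : List Bool, canon T → canon T' → m T' < m T →
      (ext0 (str R hV hH (T ++ [false])), ext0 (str R hV hH (T' ++ [false]))) ∉ R ∧
      (ext0 (str R hV hH (T' ++ [false])), ext0 (str R hV hH (T ++ [false]))) ∉ R := by
    intro T T' hT hT' hlt
    have havoid := pick_avoid R hV hH (str R hV hH T) (YsD R hV hH (m T)) (m T) (m T') hlt
    rw [YsD_eval R hV hH (m T) T' hT' hlt] at havoid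
    rw [str_canon_false R hV hH T hT]
    constructor
    · intro hmem
      exact havoid (Set.mem_union_right _ (subset_closure hmem))
    · intro hmem
      exact havoid (Set.mem_union_left _ (subset_closure hmem))
  rcases Nat.lt_or_ge (m Tβ) (m Tα) with h | h
  · rw [hval_α, hval_β]
    exact (key Tα Tβ hcα hcβ h).1
  · have h2 : m Tα < m Tβ := by omega
    rw [hval_α, hval_β]
    exact (key Tβ Tα hcβ hcα h2).2

end Construction
end S7

/-- If all sections of `R` are nowhere dense, then there is an injective continuous
map preserving `ℙ_f` whose square avoids `R` off the diagonal of `ℙ_f`. -/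
theorem stmt7 (R : Set ((ℕ → Bool) × (ℕ → Bool)))
    (hV : ∀ α, IsNowhereDense {β | (α, β) ∈ R})
    (hH : ∀ α, IsNowhereDense {β | (β, α) ∈ R}) :
    ∃ f : (ℕ → Bool) → (ℕ → Bool), Function.Injective f ∧ Continuous f ∧
      f ⁻¹' Pf = Pf ∧
      ∀ α ∈ Pf, ∀ β ∈ Pf, α ≠ β → (f α, f β) ∉ R := by
  refine ⟨S7.fmap R hV hH, S7.fmap_injective R hV hH, S7.fmap_continuous R hV hH, ?_, ?_⟩
  · ext α
    constructor
    · intro h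
      by_contra hc
      exact S7.fmap_not_mem_Pf R hV hH hc h
    · intro h
      exact S7.fmap_mem_Pf R hV hH h
  · intro α hα β hβ hne
    exact S7.fmap_avoid R hV hH hα hβ hne
end
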